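/- arXiv:1810.04190 — 2 statements merged into one kernel-verified Lean document; each statement's English description precedes it below -/
import Mathlib

section
/- Counting characterization of satisfaction: In the setting above (finite S, finite index set I, families C_s ⊆ 𝒫(S) each containing ∅, cover-boundaries C̃_s, C̃ = ⋃_s C̃_s, I_T = {s : T ∈ C̃_s}, and for T ∈ C̃, s ∈ I_T, H_{T,s} = {U ∈ C_s : T ⊊ U} with f_{T,s} : H_{T,s} → ℤ the unique function with ∑_{W ⊆ U, W ∈ H_{T,s}} f_{T,s}(W) = 1 for all U ∈ H_{T,s}): if B ∈ C_s for all s ∈ I, then for every T ∈ C̃ with T ⊆ B, ∑_{s ∈ I_T} ∑_{W ∈ H_{T,s}, W ⊆ B} f_{T,s}(W) = |I_T|; whereas if B ∉ C_s for some s, then with T_B as given by the maximal-witness lemma, ∑_{s ∈ I_{T_B}} ∑_{W ∈ H_{T_B,s}, W ⊆ B} f_{T_B,s}(W) < |I_{T_B}|. -/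
open scoped Classical

/-- Extension lemma: if `B ∉ Cs` and `W₀ ∈ Cs` with `W₀ ⊆ B ⊆ S`, then there is a
cover-boundary element `T` with `W₀ ⊊ T ⊆ B`. -/
private lemma extend_witness {α : Type*} [DecidableEq α]
    (S : Finset α) (Cs : Finset (Finset α)) (B : Finset α) (hB : B ⊆ S)
    (hBnot : B ∉ Cs) (W₀ : Finset α) (hW₀ : W₀ ∈ Cs) (hW₀B : W₀ ⊆ B) :
    ∃ T : Finset α, W₀ ⊂ T ∧ T ⊆ B ∧ T ⊆ S ∧ T ∉ Cs ∧
      ∃ W ∈ Cs, W ⊆ T ∧ (T \ W).card = 1 := by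
  classical
  set F := Cs.filter (fun W => W₀ ⊆ W ∧ W ⊆ B) with hF
  have hFne : F.Nonempty := ⟨W₀, by simp [hF, hW₀, hW₀B]⟩
  obtain ⟨W, hWF, hWmax⟩ := F.exists_max_image Finset.card hFne
  simp only [hF, Finset.mem_filter] at hWF
  obtain ⟨hWC, hW₀W, hWB⟩ := hWF
  have hWneB : W ≠ B := fun h => hBnot (h ▸ hWC)
  obtain ⟨x, hxB, hxW⟩ := Finset.exists_of_ssubset (hWB.ssubset_of_ne hWneB)
  have hTB : insert x W ⊆ B := Finset.insert_subset hxB hWB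
  have hsd : (insert x W \ W).card = 1 := by
    have : insert x W \ W = {x} := by
      ext y
      simp only [Finset.mem_sdiff, Finset.mem_insert, Finset.mem_singleton]
      constructor
      · rintro ⟨h1 | h1, h2⟩
        · exact h1
        · exact absurd h1 h2
      · rintro rfl; exact ⟨Or.inl rfl, hxW⟩
    simp [this]
  refine ⟨insert x W, ?_, hTB, hTB.trans hB, ?_, W, hWC, Finset.subset_insert _ _, hsd⟩
  · exact lt_of_le_of_lt hW₀W (Finset.ssubset_insert hxW)
  · intro hmem
    have hins : insert x W ∈ F := by
      simp only [hF, Finset.mem_filter]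
      exact ⟨hmem, hW₀W.trans (Finset.subset_insert _ _), hTB⟩
    have := hWmax _ hins
    have hcard : W.card < (insert x W).card := Finset.card_lt_card (Finset.ssubset_insert hxW)
    omega

/-- Counting characterization of satisfaction: if `B` satisfies all constraints then
for every `T ∈ C̃` with `T ⊆ B` the double sum equals `|I_T|`; if `B` violates some
constraint, then for a maximal witness `T_B` the double sum is strictly less than
`|I_{T_B}|`. -/
theorem counting_characterization {α ι : Type*} [DecidableEq α]
    (S : Finset α) (I : Finset ι) (C : ι → Finset (Finset α))
    (hCS : ∀ s ∈ I, ∀ W ∈ C s, W ⊆ S)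
    (hempty : ∀ s ∈ I, ∅ ∈ C s)
    (Ct : ι → Set (Finset α))
    (hCt : ∀ s, Ct s =
      {U | U ⊆ S ∧ U ∉ C s ∧ ∃ W ∈ C s, W ⊆ U ∧ (U \ W).card = 1})
    (f : Finset α → ι → Finset α → ℤ)
    (hf1 : ∀ T : Finset α, ∀ s ∈ I, ∀ U ∈ (C s).filter (fun U => T ⊂ U),
      ∑ W ∈ ((C s).filter (fun U' => T ⊂ U')).filter (· ⊆ U), f T s W = 1)
    (B : Finset α) (hB : B ⊆ S) :
    ((∀ s ∈ I, B ∈ C s) →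
      ∀ T : Finset α, T ⊆ B → (∃ s ∈ I, T ∈ Ct s) →
        ∑ s ∈ I.filter (fun s => T ∈ Ct s),
            ∑ W ∈ ((C s).filter (fun U => T ⊂ U)).filter (· ⊆ B), f T s W =
          ((I.filter (fun s => T ∈ Ct s)).card : ℤ)) ∧
    ((∃ s ∈ I, B ∉ C s) →
      ∃ T : Finset α, T ⊆ B ∧ (∃ s ∈ I, T ∈ Ct s ∧ B ∉ C s) ∧
        ∑ s ∈ I.filter (fun s => T ∈ Ct s),
            ∑ W ∈ ((C s).filter (fun U => T ⊂ U)).filter (· ⊆ B), f T s W <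
          ((I.filter (fun s => T ∈ Ct s)).card : ℤ)) := by
  classical
  -- a reusable fact: if `B ∈ C s` and `T ∈ Ct s` with `T ⊆ B`, the inner sum is 1
  have key : ∀ s ∈ I, B ∈ C s → ∀ T : Finset α, T ⊆ B → T ∈ Ct s →
      ∑ W ∈ ((C s).filter (fun U => T ⊂ U)).filter (· ⊆ B), f T s W = 1 := by
    intro s hsI hBs T hTB hTs
    rw [hCt s] at hTs
    obtain ⟨-, hTnot, -⟩ := hTs
    have hTne : T ≠ B := fun h => hTnot (h ▸ hBs)
    have hBmem : B ∈ (C s).filter (fun U => T ⊂ U) :=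
      Finset.mem_filter.2 ⟨hBs, hTB.ssubset_of_ne hTne⟩
    exact hf1 T s hsI B hBmem
  constructor
  · -- satisfaction case
    intro hall T hTB _
    rw [Finset.sum_congr rfl (fun s hs => by
      rcases Finset.mem_filter.1 hs with ⟨hsI, hTs⟩
      exact key s hsI (hall s hsI) T hTB hTs)]
    simp
  · -- violation case
    rintro ⟨s₀, hs₀I, hBs₀⟩
    -- the finset of candidate witnesses
    set 𝒯 := S.powerset.filter
      (fun T => T ⊆ B ∧ ∃ s ∈ I, T ∈ Ct s ∧ B ∉ C s) with h𝒯
    have hmem𝒯 : ∀ T : Finset α, T ∈ 𝒯 ↔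
        T ⊆ S ∧ T ⊆ B ∧ ∃ s ∈ I, T ∈ Ct s ∧ B ∉ C s := by
      intro T
      simp only [h𝒯, Finset.mem_filter, Finset.mem_powerset]
    have h𝒯ne : 𝒯.Nonempty := by
      obtain ⟨T₀, hss, hTB₀, hTS₀, hTnot₀, hw₀⟩ :=
        extend_witness S (C s₀) B hB hBs₀ ∅ (hempty s₀ hs₀I) (Finset.empty_subset _)
      refine ⟨T₀, (hmem𝒯 T₀).2 ⟨hTS₀, hTB₀, s₀, hs₀I, ?_, hBs₀⟩⟩
      rw [hCt s₀]
      exact ⟨hTS₀, hTnot₀, hw₀⟩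
    obtain ⟨T, hT𝒯, hTmax⟩ := 𝒯.exists_max_image Finset.card h𝒯ne
    obtain ⟨hTS, hTB, s₁, hs₁I, hTs₁, hBs₁⟩ := (hmem𝒯 T).1 hT𝒯
    refine ⟨T, hTB, ⟨s₁, hs₁I, hTs₁, hBs₁⟩, ?_⟩
    -- for any `s` in the filter with `B ∉ C s`, the inner filter is empty
    have hzero : ∀ s ∈ I, T ∈ Ct s → B ∉ C s →
        ((C s).filter (fun U => T ⊂ U)).filter (· ⊆ B) = ∅ := by
      intro s hsI hTs hBs
      rw [Finset.eq_empty_iff_forall_notMem]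
      intro W hW
      rcases Finset.mem_filter.1 hW with ⟨hW1, hWB⟩
      rcases Finset.mem_filter.1 hW1 with ⟨hWC, hTW⟩
      obtain ⟨T', hWT', hT'B, hT'S, hT'not, hw'⟩ :=
        extend_witness S (C s) B hB hBs W hWC hWB
      have hT'𝒯 : T' ∈ 𝒯 := by
        refine (hmem𝒯 T').2 ⟨hT'S, hT'B, s, hsI, ?_, hBs⟩
        rw [hCt s]
        exact ⟨hT'S, hT'not, hw'⟩
      have hle := hTmax _ hT'𝒯
      have h1 : T.card < W.card := Finset.card_lt_card hTW
      have h2 : W.card < T'.card := Finset.card_lt_card hWT'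
      omega
    -- now compare with the constant-1 sum
    have hb : ((I.filter (fun s => T ∈ Ct s)).card : ℤ) =
        ∑ _s ∈ I.filter (fun s => T ∈ Ct s), (1 : ℤ) := by simp
    rw [hb]
    apply Finset.sum_lt_sum
    · intro s hs
      rcases Finset.mem_filter.1 hs with ⟨hsI, hTs⟩
      by_cases hBs : B ∈ C s
      · exact le_of_eq (key s hsI hBs T hTB hTs)
      · rw [hzero s hsI hTs hBs]; simp
    · refine ⟨s₁, Finset.mem_filter.2 ⟨hs₁I, hTs₁⟩, ?_⟩
      rw [hzero s₁ hs₁I hTs₁ hBs₁]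
      simp
end

section
/- Boundedness of the inversion function f_{T,s}: Let H be a finite family of finite sets, each of size at most k, ordered by inclusion, and let f : H → ℤ be the unique function with ∑_{W ∈ H, W ⊆ U} f(W) = 1 for all U ∈ H. Then there is a computable function h : ℕ → ℕ (depending only on k) such that |f(W)| ≤ h(k) for all W ∈ H. -/
open scoped Classical

/-- Recursive bound: `B k n` bounds `|f W|` when `W.card ≤ n`. -/
def invBound (k : ℕ) : ℕ → ℕ
  | 0 => 1
  | n + 1 => 1 + 2 ^ k * invBound k n

lemma natAbs_sum_le {β : Type*} (s : Finset β) (f : β → ℤ) :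
    (∑ i ∈ s, f i).natAbs ≤ ∑ i ∈ s, (f i).natAbs := by
  classical
  induction s using Finset.induction_on with
  | empty => simp
  | insert _ _ h ih =>
    rw [Finset.sum_insert h, Finset.sum_insert h]
    exact le_trans (Int.natAbs_add_le _ _) (by omega)

lemma invBound_mono (k : ℕ) : Monotone (invBound k) := by
  apply monotone_nat_of_le_succ
  intro n
  have h1 : 1 ≤ 2 ^ k := Nat.one_le_two_pow
  calc invBound k n ≤ 2 ^ k * invBound k n := Nat.le_mul_of_pos_left _ (by positivity)
    _ ≤ 1 + 2 ^ k * invBound k n := Nat.le_add_left _ _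

/-- Boundedness of the inversion function: if every member of `H` has size at most `k`
and `f` satisfies the normalization `∑_{W ∈ H, W ⊆ U} f W = 1` for all `U ∈ H`, then
`|f W|` is bounded by `h k` for some function `h` depending only on `k`. -/
theorem inversion_function_bound :
    ∃ h : ℕ → ℕ, ∀ (α : Type) [DecidableEq α] (H : Finset (Finset α)) (k : ℕ),
      (∀ A ∈ H, A.card ≤ k) →
      ∀ f : Finset α → ℤ,
        (∀ U ∈ H, ∑ W ∈ H.filter (· ⊆ U), f W = 1) →
        ∀ W ∈ H, (f W).natAbs ≤ h k := by
  refine ⟨fun k => invBound k k, ?_⟩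
  intro α _ H k hk f hf W hW
  -- key recurrence: f W = 1 - sum over strict subsets
  have key : ∀ W ∈ H, f W = 1 - ∑ U ∈ H.filter (· ⊂ W), f U := by
    intro W hW
    have hsplit : H.filter (· ⊆ W) = insert W (H.filter (· ⊂ W)) := by
      ext U
      simp only [Finset.mem_filter, Finset.mem_insert]
      constructor
      · rintro ⟨hU, hUW⟩
        rcases eq_or_ne U W with h | h
        · exact Or.inl h
        · exact Or.inr ⟨hU, Finset.ssubset_iff_subset_ne.mpr ⟨hUW, h⟩⟩
      · rintro (rfl | ⟨hU, hUW⟩)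
        · exact ⟨hW, le_rfl⟩
        · exact ⟨hU, hUW.subset⟩
    have hnot : W ∉ H.filter (· ⊂ W) := by
      simp only [Finset.mem_filter, not_and]
      exact fun _ => ssubset_irrefl W
    have := hf W hW
    rw [hsplit, Finset.sum_insert hnot] at this
    linarith
  suffices main : ∀ n, ∀ W ∈ H, W.card ≤ n → (f W).natAbs ≤ invBound k n by
    exact main k W hW (hk W hW)
  intro n
  induction n with
  | zero =>
    intro W hW hcard
    have hWe : W = ∅ := Finset.card_eq_zero.mp (Nat.le_zero.mp hcard)
    have hfilter : H.filter (· ⊂ W) = ∅ := by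
      apply Finset.filter_false_of_mem
      intro U _ hU
      subst hWe
      exact absurd hU (by simp)
    have := key W hW
    rw [hfilter, Finset.sum_empty] at this
    simp [this, invBound]
  | succ n ih =>
    intro W hW hcard
    have hW1 := key W hW
    have hbound : (f W).natAbs ≤ 1 + ∑ U ∈ H.filter (· ⊂ W), (f U).natAbs := by
      rw [hW1]
      calc (1 - ∑ U ∈ H.filter (· ⊂ W), f U).natAbs
          ≤ (1 : ℤ).natAbs + (∑ U ∈ H.filter (· ⊂ W), f U).natAbs :=
            Int.natAbs_sub_le 1 _
        _ ≤ 1 + ∑ U ∈ H.filter (· ⊂ W), (f U).natAbs := by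
            simp only [Int.natAbs_one]
            exact Nat.add_le_add_left (natAbs_sum_le _ _) 1
    have hsum : ∑ U ∈ H.filter (· ⊂ W), (f U).natAbs
        ≤ (H.filter (· ⊂ W)).card * invBound k n := by
      calc ∑ U ∈ H.filter (· ⊂ W), (f U).natAbs
          ≤ ∑ _U ∈ H.filter (· ⊂ W), invBound k n := by
            apply Finset.sum_le_sum
            intro U hU
            rw [Finset.mem_filter] at hU
            have hlt : U.card < W.card := Finset.card_lt_card hU.2
            exact ih U hU.1 (by omega)
        _ = (H.filter (· ⊂ W)).card * invBound k n := by
            rw [Finset.sum_const, smul_eq_mul]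
    have hcard2 : (H.filter (· ⊂ W)).card ≤ 2 ^ k := by
      have hsub : H.filter (· ⊂ W) ⊆ W.powerset := by
        intro U hU
        rw [Finset.mem_filter] at hU
        exact Finset.mem_powerset.mpr hU.2.subset
      calc (H.filter (· ⊂ W)).card ≤ W.powerset.card := Finset.card_le_card hsub
        _ = 2 ^ W.card := Finset.card_powerset W
        _ ≤ 2 ^ k := Nat.pow_le_pow_right (by norm_num) (hk W hW)
    calc (f W).natAbs ≤ 1 + (H.filter (· ⊂ W)).card * invBound k n := le_trans hbound (by omega)
      _ ≤ 1 + 2 ^ k * invBound k n := by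
          have := Nat.mul_le_mul_right (invBound k n) hcard2
          omega
      _ = invBound k (n + 1) := rfl
end
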